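/- In the one-dimensional split framework, suppose Assumption (Q) holds, let Λ ∈ (0,1], and assume every best split s* satisfies 4·P(s*)·(1 − P(s*)) ≥ Λ. Set Ψ = 1 − √(1 − Λ), Γ = 2·min{q₁(Ψ/2), 1 − q₂(1 − Ψ/2)}, p_L = q₂^{-1}(Γ²/2), p_R = 1 − q₁^{-1}(1 − Γ²/2), and p̄ = min{p_L, p_R}. Let δ ∈ [0,1], let ŝ be a random variable such that with probability at least 1 − δ the distance from ŝ to the set S* of best splits is at most ((b − a)/2)·Γ·(1 − Γ). Then: (i) with probability at least 1 − δ, a + ((b − a)/2)·Γ² ≤ ŝ ≤ b − ((b − a)/2)·Γ²; and (ii) if moreover W_1, …, W_N are i.i.d. random variables (on the same probability space) taking values in [a,b] with ℙ(W_i ≤ s) = P(s) for all s ∈ [a,b], then with probability at least 1 − δ − 2·exp(−N·p̄²/2), #{i ≤ N : W_i ≤ ŝ} ≥ N·p_L/2 and #{i ≤ N : W_i > ŝ} ≥ N·p_R/2. -/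

import Mathlib

open MeasureTheory Set ProbabilityTheory intervalIntegral

noncomputable section


lemma bernoulli_mgf_bound {q : ℝ} (h0 : 0 ≤ q) (h1 : q ≤ 1) (t : ℝ) :
    1 - q + q * Real.exp t ≤ Real.exp (t * q + t ^ 2 / 8) := by
  have hD : ∀ s : ℝ, 0 < 1 - q + q * Real.exp s := by
    intro s
    rcases eq_or_lt_of_le h0 with h | h
    · simp [← h]
    · have := Real.exp_pos s
      nlinarith
  set F : ℝ → ℝ := fun s => s * q + s ^ 2 / 8 - Real.log (1 - q + q * Real.exp s) with hF
  set f₁ : ℝ → ℝ := fun s => q + s / 4 - q * Real.exp s / (1 - q + q * Real.exp s) with hf₁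
  set f₂ : ℝ → ℝ :=
    fun s => 1 / 4 - q * Real.exp s * (1 - q) / (1 - q + q * Real.exp s) ^ 2 with hf₂
  have hDder : ∀ s : ℝ, HasDerivAt (fun s => 1 - q + q * Real.exp s) (q * Real.exp s) s := by
    intro s
    simpa using ((Real.hasDerivAt_exp s).const_mul q).const_add (1 - q)
  have hderivF : ∀ s, HasDerivAt F (f₁ s) s := by
    intro s
    have hlog := (hDder s).log (ne_of_gt (hD s))
    have hpoly : HasDerivAt (fun s : ℝ => s * q + s ^ 2 / 8) (q + s / 4) s := by
      have h1 : HasDerivAt (fun s : ℝ => s * q) q s := by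
        simpa using (hasDerivAt_id s).mul_const q
      have h2 : HasDerivAt (fun s : ℝ => s ^ 2 / 8) (s / 4) s := by
        have := (hasDerivAt_pow 2 s).div_const 8
        exact this.congr_deriv (by norm_num; ring)
      exact h1.add h2
    exact hpoly.sub hlog
  have hderivf₁ : ∀ s, HasDerivAt f₁ (f₂ s) s := by
    intro s
    have hnum : HasDerivAt (fun s : ℝ => q * Real.exp s) (q * Real.exp s) s :=
      (Real.hasDerivAt_exp s).const_mul q
    have hdiv := hnum.div (hDder s) (ne_of_gt (hD s))
    have hpoly : HasDerivAt (fun s : ℝ => q + s / 4) (1 / 4) s := by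
      simpa using ((hasDerivAt_id s).div_const 4).const_add q
    have := hpoly.sub hdiv
    refine this.congr_deriv ?_
    have hne := ne_of_gt (hD s)
    simp only [hf₂]
    field_simp
    ring
  have hf₂nonneg : ∀ s, 0 ≤ f₂ s := by
    intro s
    have hDs := hD s
    have hde : 4 * (q * Real.exp s * (1 - q)) ≤ (1 - q + q * Real.exp s) ^ 2 := by
      nlinarith [sq_nonneg (1 - q - q * Real.exp s)]
    have : q * Real.exp s * (1 - q) / (1 - q + q * Real.exp s) ^ 2 ≤ 1 / 4 := by
      rw [div_le_iff₀ (by positivity)]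
      linarith
    simp only [hf₂]
    linarith
  have hf₁mono : Monotone f₁ :=
    monotone_of_deriv_nonneg (fun s => (hderivf₁ s).differentiableAt)
      (fun s => by rw [(hderivf₁ s).deriv]; exact hf₂nonneg s)
  have hf₁zero : f₁ 0 = 0 := by
    simp [hf₁]
  have hF0 : F 0 = 0 := by
    simp [hF]
  have hFnonneg : 0 ≤ F t := by
    rcases le_total 0 t with ht | ht
    · have := monotoneOn_of_deriv_nonneg (convex_Ici (0 : ℝ))
        (fun s _ => (hderivF s).differentiableAt.continuousAt.continuousWithinAt)
        (fun s _ => (hderivF s).differentiableAt.differentiableWithinAt)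
        (fun s hs => by
          rw [(hderivF s).deriv]
          rw [interior_Ici] at hs
          calc (0:ℝ) = f₁ 0 := hf₁zero.symm
          _ ≤ f₁ s := hf₁mono (le_of_lt hs))
      have := this (Set.self_mem_Ici) (Set.mem_Ici.2 ht) ht
      linarith [hF0 ▸ this]
    · have := antitoneOn_of_deriv_nonpos (convex_Iic (0 : ℝ))
        (fun s _ => (hderivF s).differentiableAt.continuousAt.continuousWithinAt)
        (fun s _ => (hderivF s).differentiableAt.differentiableWithinAt)
        (fun s hs => by
          rw [(hderivF s).deriv]
          rw [interior_Iic] at hs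
          calc f₁ s ≤ f₁ 0 := hf₁mono (le_of_lt hs)
          _ = 0 := hf₁zero)
      have := this (Set.mem_Iic.2 ht) (Set.self_mem_Iic) ht
      linarith [hF0 ▸ this]
  have : Real.log (1 - q + q * Real.exp t) ≤ t * q + t ^ 2 / 8 := by
    simp only [hF] at hFnonneg
    linarith
  calc 1 - q + q * Real.exp t = Real.exp (Real.log (1 - q + q * Real.exp t)) :=
        (Real.exp_log (hD t)).symm
  _ ≤ Real.exp (t * q + t ^ 2 / 8) := Real.exp_le_exp.2 this


lemma binom_lower_tail {Ω : Type*} [MeasurableSpace Ω] (Pr : Measure Ω) [IsProbabilityMeasure Pr]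
    {N : ℕ} (X : Fin N → Ω → ℝ) (hmeas : ∀ i, Measurable (X i))
    (hval : ∀ i ω, X i ω = 0 ∨ X i ω = 1)
    (hind : iIndepFun X Pr)
    (q c : ℝ) (hq : ∀ i, (Pr {ω | X i ω = 1}).toReal = q)
    (hq1 : q ≤ 1) (hc : 0 ≤ c) (h2c : 2 * c ≤ q) :
    (Pr {ω | (∑ i, X i ω) ≤ (N : ℝ) * c}).toReal ≤ Real.exp (-2 * N * c ^ 2) := by
  set t : ℝ := -4 * (q - c) with htdef
  have ht0 : t ≤ 0 := by simp only [htdef]; nlinarith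
  have hXi_int : ∀ i, Integrable (fun ω => Real.exp (t * X i ω)) Pr := by
    intro i
    refine Integrable.mono' (integrable_const (Real.exp |t|))
      ((hmeas i).const_mul t).exp.aestronglyMeasurable (ae_of_all _ fun ω => ?_)
    rw [Real.norm_eq_abs, Real.abs_exp]
    rcases hval i ω with h | h
    · simp [h, Real.exp_le_exp, abs_nonneg]
    · simp only [h, mul_one]
      exact Real.exp_le_exp.2 (le_abs_self t)
  have hint : Integrable (fun ω => Real.exp (t * (∑ i, X i) ω)) Pr :=
    hind.integrable_exp_mul_sum hmeas (fun i _ => hXi_int i)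
  have hch := measure_le_le_exp_mul_mgf (μ := Pr) (X := ∑ i, X i) ((N : ℝ) * c) ht0 hint
  rw [hind.mgf_sum hmeas Finset.univ] at hch
  have hmgf : ∀ i : Fin N, mgf (X i) Pr t = 1 - q + q * Real.exp t := by
    intro i
    have heq : (fun ω => Real.exp (t * X i ω)) =
        fun ω => Set.indicator {ω | X i ω = 1} (fun _ => Real.exp t - 1) ω + 1 := by
      funext ω
      rcases hval i ω with h | h
      · simp [Set.indicator_apply, h]
      · simp [Set.indicator_apply, h]
    have hms : MeasurableSet {ω | X i ω = 1} := by
      have : {ω | X i ω = 1} = X i ⁻¹' {1} := rfl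
      rw [this]
      exact (hmeas i) (measurableSet_singleton 1)
    rw [mgf, heq, integral_add ((integrable_const _).indicator hms) (integrable_const 1),
      integral_indicator_const _ hms, MeasureTheory.integral_const]
    simp [show Pr.real {ω | X i ω = 1} = q from hq i]
    ring
  have hq0 : 0 ≤ q := by nlinarith
  have hmgf_bound : ∀ i : Fin N, mgf (X i) Pr t ≤ Real.exp (t * q + t ^ 2 / 8) := by
    intro i
    rw [hmgf i]
    exact bernoulli_mgf_bound hq0 hq1 t
  have hprod : (∏ i : Fin N, mgf (X i) Pr t) ≤ Real.exp (t * q + t ^ 2 / 8) ^ N := by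
    calc (∏ i : Fin N, mgf (X i) Pr t) ≤ ∏ i : Fin N, Real.exp (t * q + t ^ 2 / 8) :=
          Finset.prod_le_prod (fun i _ => mgf_nonneg) (fun i _ => hmgf_bound i)
    _ = Real.exp (t * q + t ^ 2 / 8) ^ N := by
        rw [Finset.prod_const, Finset.card_univ, Fintype.card_fin]
  have hfinal : Real.exp (-t * ((N : ℝ) * c)) * Real.exp (t * q + t ^ 2 / 8) ^ N ≤
      Real.exp (-2 * N * c ^ 2) := by
    rw [← Real.exp_nat_mul, ← Real.exp_add]
    apply Real.exp_le_exp.2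
    have h1 : -t * ((N : ℝ) * c) + (N : ℝ) * (t * q + t ^ 2 / 8) =
        (N : ℝ) * (t * (q - c) + t ^ 2 / 8) := by ring
    rw [h1, htdef]
    have hN : (0 : ℝ) ≤ (N : ℝ) := Nat.cast_nonneg N
    have hqc : c ≤ q - c := by linarith
    nlinarith [sq_nonneg (q - c), mul_le_mul_of_nonneg_left (by nlinarith [sq_nonneg (q-c), sq_nonneg c] : -4 * (q-c) * (q-c) + (-4*(q-c))^2/8 ≤ -2 * c^2) hN]
  have hset : {ω | (∑ i, X i ω) ≤ (N : ℝ) * c} = {ω | (∑ i, X i) ω ≤ (N : ℝ) * c} := by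
    ext ω; simp [Finset.sum_apply]
  rw [hset]
  calc (Pr {ω | (∑ i, X i) ω ≤ (N : ℝ) * c}).toReal
      ≤ Real.exp (-t * ((N : ℝ) * c)) * ∏ i : Fin N, mgf (X i) Pr t := hch
  _ ≤ Real.exp (-t * ((N : ℝ) * c)) * Real.exp (t * q + t ^ 2 / 8) ^ N := by
      apply mul_le_mul_of_nonneg_left hprod (Real.exp_nonneg _)
  _ ≤ Real.exp (-2 * N * c ^ 2) := hfinal


lemma exists_best_split (a b : ℝ) (hab : a < b) (p g : ℝ → ℝ)
    (hp_cont : ContinuousOn p (Set.Icc a b))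
    (hp_pos : ∀ u ∈ Set.Icc a b, 0 < p u)
    (hp_one : (∫ u in a..b, p u) = 1)
    (hg_cont : ContinuousOn g (Set.Icc a b))
    (P M Xi Δ : ℝ → ℝ)
    (hP : ∀ s, P s = ∫ u in a..s, p u)
    (hM : ∀ s, M s = ∫ u in a..s, g u * p u)
    (hXi : ∀ s, Xi s = M s - M b * P s)
    (hΔ : ∀ s, Δ s = Xi s ^ 2 / (P s * (1 - P s))) :
    ∃ s ∈ Set.Icc a b, ∀ s' ∈ Set.Icc a b, Δ s' ≤ Δ s := by
  have haIcc : a ∈ Icc a b := ⟨le_refl a, hab.le⟩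
  have hbIcc : b ∈ Icc a b := ⟨hab.le, le_refl b⟩
  -- integrability of continuous functions on subintervals
  have hsub : ∀ s ∈ Icc a b, ∀ t ∈ Icc a b, uIcc s t ⊆ Icc a b := fun s hs t ht =>
    uIcc_subset_Icc hs ht
  have hint : ∀ (f : ℝ → ℝ), ContinuousOn f (Icc a b) → ∀ s ∈ Icc a b, ∀ t ∈ Icc a b,
      IntervalIntegrable f MeasureTheory.volume s t := fun f hf s hs t ht =>
    (hf.mono (hsub s hs t ht)).intervalIntegrable
  have hgp_cont : ContinuousOn (fun u => g u * p u) (Icc a b) := hg_cont.mul hp_cont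
  -- basic facts about P
  have hPa : P a = 0 := by rw [hP]; simp
  have hPb : P b = 1 := by rw [hP]; exact hp_one
  have hPcont : ContinuousOn P (Icc a b) := by
    have h2 : ContinuousOn (fun s => ∫ u in a..s, p u) (uIcc a b) :=
      continuousOn_primitive_interval (by
        rw [uIcc_of_le hab.le]
        exact hp_cont.integrableOn_Icc)
    rw [uIcc_of_le hab.le] at h2
    have : P = fun s => ∫ u in a..s, p u := funext hP
    rw [this]
    exact h2
  have hPadd : ∀ s ∈ Icc a b, ∀ t ∈ Icc a b, P s + (∫ u in s..t, p u) = P t := by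
    intro s hs t ht
    rw [hP, hP]
    exact integral_add_adjacent_intervals (hint p hp_cont a haIcc s hs) (hint p hp_cont s hs t ht)
  have hPmono : StrictMonoOn P (Icc a b) := by
    intro s hs t ht hst
    have hpos : 0 < ∫ u in s..t, p u := by
      apply intervalIntegral_pos_of_pos_on (hint p hp_cont s hs t ht)
      · intro x hx
        exact hp_pos x ⟨le_trans hs.1 hx.1.le, le_trans hx.2.le ht.2⟩
      · exact hst
    have := hPadd s hs t ht
    linarith
  have hP01 : ∀ s ∈ Icc a b, 0 ≤ P s ∧ P s ≤ 1 := by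
    intro s hs
    constructor
    · rw [← hPa]; exact hPmono.monotoneOn haIcc hs hs.1
    · rw [← hPb]; exact hPmono.monotoneOn hs hbIcc hs.2
  -- M continuous
  have hMcont : ContinuousOn M (Icc a b) := by
    have h2 : ContinuousOn (fun s => ∫ u in a..s, g u * p u) (uIcc a b) :=
      continuousOn_primitive_interval (by
        rw [uIcc_of_le hab.le]
        exact hgp_cont.integrableOn_Icc)
    rw [uIcc_of_le hab.le] at h2
    have : M = fun s => ∫ u in a..s, g u * p u := funext hM
    rw [this]
    exact h2
  have hXiCont : ContinuousOn Xi (Icc a b) := by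
    have : Xi = fun s => M s - M b * P s := funext hXi
    rw [this]
    exact hMcont.sub (continuousOn_const.mul hPcont)
  -- bound on |g - M b|
  obtain ⟨C, hC⟩ := isCompact_Icc.exists_bound_of_continuousOn (hg_cont.sub continuousOn_const)
  have hC' : ∀ u ∈ Icc a b, |g u - M b| ≤ C := by
    intro u hu
    have := hC u hu
    simpa [Real.norm_eq_abs] using this
  have hC0 : 0 ≤ C := le_trans (abs_nonneg _) (hC' a haIcc)
  set φ : ℝ → ℝ := fun u => (g u - M b) * p u with hφdef
  have hφcont : ContinuousOn φ (Icc a b) := (hg_cont.sub continuousOn_const).mul hp_cont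
  have hXi_eq : ∀ s ∈ Icc a b, Xi s = ∫ u in a..s, φ u := by
    intro s hs
    rw [hXi, hM, hP]
    rw [← intervalIntegral.integral_const_mul,
      ← intervalIntegral.integral_sub (hint _ hgp_cont a haIcc s hs)
        (by
          have : ContinuousOn (fun u => M b * p u) (Icc a b) := continuousOn_const.mul hp_cont
          exact hint _ this a haIcc s hs)]
    congr 1
    funext u
    simp [hφdef]
    ring
  have habs : ∀ s ∈ Icc a b, ∀ t ∈ Icc a b, s ≤ t →
      |∫ u in s..t, φ u| ≤ C * (P t - P s) := by
    intro s hs t ht hst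
    calc |∫ u in s..t, φ u| ≤ ∫ u in s..t, |φ u| :=
          intervalIntegral.abs_integral_le_integral_abs hst
    _ ≤ ∫ u in s..t, C * p u := by
        apply intervalIntegral.integral_mono_on hst
        · exact (hint _ (hφcont.abs) s hs t ht)
        · exact hint _ (continuousOn_const.mul hp_cont) s hs t ht
        · intro x hx
          have hxI : x ∈ Icc a b := ⟨le_trans hs.1 hx.1, le_trans hx.2 ht.2⟩
          rw [hφdef]
          simp only
          rw [abs_mul, abs_of_nonneg (hp_pos x hxI).le]
          exact mul_le_mul_of_nonneg_right (hC' x hxI) (hp_pos x hxI).le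
    _ = C * (P t - P s) := by
        rw [intervalIntegral.integral_const_mul]
        have := hPadd s hs t ht
        have h2 : (∫ u in s..t, p u) = P t - P s := by linarith
        rw [h2]
  have hXi_le : ∀ s ∈ Icc a b, |Xi s| ≤ C * P s := by
    intro s hs
    rw [hXi_eq s hs]
    have := habs a haIcc s hs hs.1
    rwa [hPa, sub_zero] at this
  have hXib : Xi b = 0 := by rw [hXi, hPb]; ring
  have hXi_le' : ∀ s ∈ Icc a b, |Xi s| ≤ C * (1 - P s) := by
    intro s hs
    have hadd : (∫ u in a..s, φ u) + (∫ u in s..b, φ u) = ∫ u in a..b, φ u :=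
      integral_add_adjacent_intervals (hint _ hφcont a haIcc s hs) (hint _ hφcont s hs b hbIcc)
    have hab0 : (∫ u in a..b, φ u) = 0 := by
      rw [← hXi_eq b hbIcc]; exact hXib
    have : Xi s = -(∫ u in s..b, φ u) := by
      rw [hXi_eq s hs]; rw [hab0] at hadd; linarith
    rw [this, abs_neg]
    have := habs s hs b hbIcc hs.2
    rwa [hPb] at this
  -- nonnegativity and upper bounds for Δ
  have hΔnonneg : ∀ s ∈ Icc a b, 0 ≤ Δ s := by
    intro s hs
    rw [hΔ]
    apply div_nonneg (sq_nonneg _)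
    have := hP01 s hs
    nlinarith [this.1, this.2]
  have hUB1 : ∀ s ∈ Icc a b, Δ s ≤ C ^ 2 * (P s / (1 - P s)) := by
    intro s hs
    obtain ⟨h0, h1⟩ := hP01 s hs
    rcases eq_or_lt_of_le h0 with hP0 | hP0
    · rw [hΔ, ← hP0]
      simp
    rcases eq_or_lt_of_le h1 with hP1 | hP1
    · rw [hΔ, hP1]
      simp
    have hden : 0 < P s * (1 - P s) := by nlinarith
    rw [hΔ]
    have hnum : Xi s ^ 2 ≤ (C * P s) ^ 2 := by
      have := hXi_le s hs
      nlinarith [abs_nonneg (Xi s), sq_abs (Xi s)]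
    have h0' : P s ≠ 0 := ne_of_gt hP0
    have h1' : (1 : ℝ) - P s ≠ 0 := by linarith
    calc Xi s ^ 2 / (P s * (1 - P s)) ≤ (C * P s) ^ 2 / (P s * (1 - P s)) :=
          div_le_div_of_nonneg_right hnum hden.le
    _ = C ^ 2 * (P s / (1 - P s)) := by
        field_simp
  have hUB2 : ∀ s ∈ Icc a b, Δ s ≤ C ^ 2 * ((1 - P s) / P s) := by
    intro s hs
    obtain ⟨h0, h1⟩ := hP01 s hs
    rcases eq_or_lt_of_le h0 with hP0 | hP0
    · rw [hΔ, ← hP0]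
      simp
    rcases eq_or_lt_of_le h1 with hP1 | hP1
    · rw [hΔ, hP1]
      simp
    have hden : 0 < P s * (1 - P s) := by nlinarith
    rw [hΔ]
    have hnum : Xi s ^ 2 ≤ (C * (1 - P s)) ^ 2 := by
      have := hXi_le' s hs
      nlinarith [abs_nonneg (Xi s), sq_abs (Xi s)]
    have h0' : P s ≠ 0 := ne_of_gt hP0
    have h1' : (1 : ℝ) - P s ≠ 0 := by linarith
    calc Xi s ^ 2 / (P s * (1 - P s)) ≤ (C * (1 - P s)) ^ 2 / (P s * (1 - P s)) :=
          div_le_div_of_nonneg_right hnum hden.le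
    _ = C ^ 2 * ((1 - P s) / P s) := by
        field_simp
  -- continuity of Δ on [a, b]
  have hΔa : Δ a = 0 := by
    rw [hΔ, hPa]
    simp
  have hΔb : Δ b = 0 := by
    rw [hΔ, hPb]
    simp
  have hΔcont : ContinuousOn Δ (Icc a b) := by
    intro x hx
    rcases eq_or_lt_of_le hx.1 with hxa | hxa
    · -- x = a : squeeze
      have hu : ContinuousWithinAt (fun s => C ^ 2 * (P s / (1 - P s))) (Icc a b) a := by
        apply ContinuousWithinAt.mul continuousWithinAt_const
        apply ContinuousWithinAt.div (hPcont a haIcc)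
          (continuousWithinAt_const.sub (hPcont a haIcc))
        show (1:ℝ) - P a ≠ 0
        rw [hPa]; norm_num
      rw [← hxa]
      unfold ContinuousWithinAt
      rw [hΔa]
      have huval : (fun s => C ^ 2 * (P s / (1 - P s))) a = 0 := by
        show C ^ 2 * (P a / (1 - P a)) = 0
        rw [hPa]; simp
      have hu2 : Filter.Tendsto (fun s => C ^ 2 * (P s / (1 - P s)))
          (nhdsWithin a (Icc a b)) (nhds 0) := by
        unfold ContinuousWithinAt at hu
        rwa [huval] at hu
      apply tendsto_of_tendsto_of_tendsto_of_le_of_le'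
        (tendsto_const_nhds) hu2
      · filter_upwards [eventually_mem_nhdsWithin] with s hs
        exact hΔnonneg s hs
      · filter_upwards [eventually_mem_nhdsWithin] with s hs
        exact hUB1 s hs
    rcases eq_or_lt_of_le hx.2 with hxb | hxb
    · -- x = b : squeeze
      have hu : ContinuousWithinAt (fun s => C ^ 2 * ((1 - P s) / P s)) (Icc a b) b := by
        apply ContinuousWithinAt.mul continuousWithinAt_const
        apply ContinuousWithinAt.div (continuousWithinAt_const.sub (hPcont b hbIcc))
          (hPcont b hbIcc)
        rw [hPb]; norm_num
      rw [hxb]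
      unfold ContinuousWithinAt
      rw [hΔb]
      have huval : (fun s => C ^ 2 * ((1 - P s) / P s)) b = 0 := by
        show C ^ 2 * ((1 - P b) / P b) = 0
        rw [hPb]; simp
      have hu2 : Filter.Tendsto (fun s => C ^ 2 * ((1 - P s) / P s))
          (nhdsWithin b (Icc a b)) (nhds 0) := by
        unfold ContinuousWithinAt at hu
        rwa [huval] at hu
      apply tendsto_of_tendsto_of_tendsto_of_le_of_le'
        (tendsto_const_nhds) hu2
      · filter_upwards [eventually_mem_nhdsWithin] with s hs
        exact hΔnonneg s hs
      · filter_upwards [eventually_mem_nhdsWithin] with s hs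
        exact hUB2 s hs
    · -- interior point
      have h0 : 0 < P x := by rw [← hPa]; exact hPmono haIcc hx hxa
      have h1 : P x < 1 := by rw [← hPb]; exact hPmono hx hbIcc hxb
      have hden : P x * (1 - P x) ≠ 0 := by nlinarith
      have : ContinuousWithinAt (fun s => Xi s ^ 2 / (P s * (1 - P s))) (Icc a b) x := by
        apply ContinuousWithinAt.div
        · exact (hXiCont x hx).pow 2
        · exact (hPcont x hx).mul (continuousWithinAt_const.sub (hPcont x hx))
        · exact hden
      have hΔfun : Δ = fun s => Xi s ^ 2 / (P s * (1 - P s)) := funext hΔ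
      rw [hΔfun]
      exact this
  obtain ⟨x, hxmem, hxmax⟩ := isCompact_Icc.exists_isMaxOn ⟨a, haIcc⟩ hΔcont
  exact ⟨x, hxmem, fun s' hs' => hxmax hs'⟩

set_option maxHeartbeats 2000000 in
/-- Under Assumption (Q), if every best split is `Λ`-balanced and an
empirical split `ŝ` is, with probability at least `1 − δ`, within
`((b−a)/2)Γ(1−Γ)` of the set of best splits, then (i) with probability at least `1 − δ`
the split `ŝ` is at distance at least `((b−a)/2)Γ²` from both edges, and (ii) for i.i.d.
observations `W₁, …, W_N` with conditional distribution function `P`, with probability at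
least `1 − δ − 2exp(−N p̄²/2)` each daughter node contains the stated fraction of the
observations. -/
theorem empirical_split_node_counts
    (a b : ℝ) (hab : a < b)
    (p g : ℝ → ℝ)
    (hp_cont : ContinuousOn p (Set.Icc a b))
    (hp_pos : ∀ u ∈ Set.Icc a b, 0 < p u)
    (hp_one : (∫ u in a..b, p u) = 1)
    (hg_cont : ContinuousOn g (Set.Icc a b))
    (P M Xi G Δ Q : ℝ → ℝ)
    (hP : ∀ s, P s = ∫ u in a..s, p u)
    (hM : ∀ s, M s = ∫ u in a..s, g u * p u)
    (hXi : ∀ s, Xi s = M s - M b * P s)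
    (hG : ∀ s, G s = g s - M b)
    (hΔ : ∀ s, Δ s = Xi s ^ 2 / (P s * (1 - P s)))
    (hQ : ∀ q, Q q = sInf {s | s ∈ Set.Icc a b ∧ q ≤ P s})
    (q₁ q₂ q₁inv q₂inv : ℝ → ℝ)
    (hq₁_mono : StrictMonoOn q₁ (Set.Icc 0 1))
    (hq₁_bij : Set.BijOn q₁ (Set.Icc 0 1) (Set.Icc 0 1))
    (hq₂_mono : StrictMonoOn q₂ (Set.Icc 0 1))
    (hq₂_bij : Set.BijOn q₂ (Set.Icc 0 1) (Set.Icc 0 1))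
    (hq₁inv : ∀ y ∈ Set.Icc (0 : ℝ) 1, q₁inv y ∈ Set.Icc (0 : ℝ) 1 ∧ q₁ (q₁inv y) = y)
    (hq₂inv : ∀ y ∈ Set.Icc (0 : ℝ) 1, q₂inv y ∈ Set.Icc (0 : ℝ) 1 ∧ q₂ (q₂inv y) = y)
    (hQbounds : ∀ q ∈ Set.Icc (0 : ℝ) 1,
      q₁ q ≤ (Q q - a) / (b - a) ∧ (Q q - a) / (b - a) ≤ q₂ q)
    (Λ : ℝ) (hΛ : Λ ∈ Set.Ioc (0 : ℝ) 1)
    (Sstar : Set ℝ)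
    (hSstar : Sstar = {s | s ∈ Set.Icc a b ∧ ∀ s' ∈ Set.Icc a b, Δ s' ≤ Δ s})
    (hbal : ∀ s ∈ Sstar, Λ ≤ 4 * P s * (1 - P s))
    (Ψ Γ pL pR pbar : ℝ)
    (hΨ : Ψ = 1 - Real.sqrt (1 - Λ))
    (hΓ : Γ = 2 * min (q₁ (Ψ / 2)) (1 - q₂ (1 - Ψ / 2)))
    (hpL : pL = q₂inv (Γ ^ 2 / 2))
    (hpR : pR = 1 - q₁inv (1 - Γ ^ 2 / 2))
    (hpbar : pbar = min pL pR)
    (Ω : Type*) [MeasurableSpace Ω] (Pr : Measure Ω) [IsProbabilityMeasure Pr]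
    (δ : ℝ) (hδ : δ ∈ Set.Icc (0 : ℝ) 1)
    (shat : Ω → ℝ) (hshat_meas : Measurable shat)
    (hclose : 1 - δ ≤
      (Pr {ω | Metric.infDist (shat ω) Sstar ≤ (b - a) / 2 * Γ * (1 - Γ)}).toReal) :
    (1 - δ ≤ (Pr {ω | a + (b - a) / 2 * Γ ^ 2 ≤ shat ω ∧
        shat ω ≤ b - (b - a) / 2 * Γ ^ 2}).toReal) ∧
    (∀ (N : ℕ) (W : Fin N → Ω → ℝ),
      (∀ i, Measurable (W i)) →
      (∀ i ω, W i ω ∈ Set.Icc a b) →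
      (∀ i, ∀ s ∈ Set.Icc a b, (Pr {ω | W i ω ≤ s}).toReal = P s) →
      iIndepFun W Pr →
      1 - δ - 2 * Real.exp (-(N : ℝ) * pbar ^ 2 / 2) ≤
        (Pr {ω | (N : ℝ) * pL / 2 ≤ ((Finset.univ.filter fun i => W i ω ≤ shat ω).card : ℝ) ∧
            (N : ℝ) * pR / 2 ≤
              ((Finset.univ.filter fun i => shat ω < W i ω).card : ℝ)}).toReal) := by
  have hba : (0 : ℝ) < b - a := by linarith
  have haIcc : a ∈ Icc a b := ⟨le_refl a, hab.le⟩
  have hbIcc : b ∈ Icc a b := ⟨hab.le, le_refl b⟩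
  -- P basics
  have hPa : P a = 0 := by rw [hP]; simp
  have hPb : P b = 1 := by rw [hP]; exact hp_one
  have hPcont : ContinuousOn P (Icc a b) := by
    have h2 : ContinuousOn (fun s => ∫ u in a..s, p u) (uIcc a b) :=
      intervalIntegral.continuousOn_primitive_interval (by
        rw [uIcc_of_le hab.le]
        exact hp_cont.integrableOn_Icc)
    rw [uIcc_of_le hab.le] at h2
    have : P = fun s => ∫ u in a..s, p u := funext hP
    rw [this]
    exact h2
  have hint : ∀ s ∈ Icc a b, ∀ t ∈ Icc a b, IntervalIntegrable p MeasureTheory.volume s t :=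
    fun s hs t ht => (hp_cont.mono (uIcc_subset_Icc hs ht)).intervalIntegrable
  have hPmono : StrictMonoOn P (Icc a b) := by
    intro s hs t ht hst
    have hpos : 0 < ∫ u in s..t, p u := by
      apply intervalIntegral.intervalIntegral_pos_of_pos_on (hint s hs t ht)
      · exact fun x hx => hp_pos x ⟨le_trans hs.1 hx.1.le, le_trans hx.2.le ht.2⟩
      · exact hst
    have hadd : P s + (∫ u in s..t, p u) = P t := by
      rw [hP, hP]
      exact intervalIntegral.integral_add_adjacent_intervals (hint a haIcc s hs) (hint s hs t ht)
    linarith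
  have hP01 : ∀ s ∈ Icc a b, 0 ≤ P s ∧ P s ≤ 1 := by
    intro s hs
    exact ⟨hPa ▸ hPmono.monotoneOn haIcc hs hs.1, hPb ▸ hPmono.monotoneOn hs hbIcc hs.2⟩
  -- Ψ, Γ basics
  obtain ⟨hΛ0, hΛ1⟩ := hΛ
  set y := Real.sqrt (1 - Λ) with hydef
  have hy0 : 0 ≤ y := Real.sqrt_nonneg _
  have hy2 : y ^ 2 = 1 - Λ := Real.sq_sqrt (by linarith)
  have hy1 : y < 1 := by nlinarith
  have hΨ0 : 0 < Ψ := by rw [hΨ]; linarith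
  have hΨ1 : Ψ ≤ 1 := by rw [hΨ]; linarith
  have hΨmem : Ψ / 2 ∈ Icc (0 : ℝ) 1 := ⟨by linarith, by linarith⟩
  have hΨmem' : 1 - Ψ / 2 ∈ Icc (0 : ℝ) 1 := ⟨by linarith, by linarith⟩
  have h0mem : (0 : ℝ) ∈ Icc (0 : ℝ) 1 := ⟨le_refl 0, zero_le_one⟩
  have h1mem : (1 : ℝ) ∈ Icc (0 : ℝ) 1 := ⟨zero_le_one, le_refl 1⟩
  have hq₁0 : q₁ 0 = 0 := by
    obtain ⟨x, hx, hx0⟩ := hq₁_bij.surjOn h0mem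
    rcases eq_or_lt_of_le hx.1 with h | h
    · rw [← h] at hx0; exact hx0
    · have h1 := hq₁_mono h0mem hx h
      rw [hx0] at h1
      have h2 := (hq₁_bij.mapsTo h0mem).1
      linarith
  have hq₂1 : q₂ 1 = 1 := by
    obtain ⟨x, hx, hx1⟩ := hq₂_bij.surjOn h1mem
    rcases eq_or_lt_of_le hx.2 with h | h
    · rw [h] at hx1; exact hx1
    · have h1 := hq₂_mono hx h1mem h
      rw [hx1] at h1
      have h2 := (hq₂_bij.mapsTo h1mem).2
      linarith
  have hq₁Ψ : 0 < q₁ (Ψ / 2) := by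
    have := hq₁_mono h0mem hΨmem (by linarith)
    rw [hq₁0] at this
    exact this
  have hq₂Ψ : q₂ (1 - Ψ / 2) < 1 := by
    have := hq₂_mono hΨmem' h1mem (by linarith)
    rw [hq₂1] at this
    exact this
  have hminΓ : Γ / 2 = min (q₁ (Ψ / 2)) (1 - q₂ (1 - Ψ / 2)) := by rw [hΓ]; ring
  have hΓ0 : 0 < Γ := by
    have hmin : 0 < min (q₁ (Ψ / 2)) (1 - q₂ (1 - Ψ / 2)) := lt_min hq₁Ψ (by linarith)
    rw [hΓ]; linarith
  have hΓ1 : Γ ≤ 1 := by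
    have h1 := (hQbounds (Ψ / 2) hΨmem).1.trans (hQbounds (Ψ / 2) hΨmem).2
    have h2 : q₂ (Ψ / 2) ≤ q₂ (1 - Ψ / 2) := hq₂_mono.monotoneOn hΨmem hΨmem' (by linarith)
    have h3 := min_le_left (q₁ (Ψ / 2)) (1 - q₂ (1 - Ψ / 2))
    have h4 := min_le_right (q₁ (Ψ / 2)) (1 - q₂ (1 - Ψ / 2))
    rw [hΓ]
    linarith
  -- localization of best splits
  have hloc : ∀ s ∈ Sstar, a + (b - a) / 2 * Γ ≤ s ∧ s ≤ b - (b - a) / 2 * Γ := by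
    intro s hs
    have hsI : s ∈ Icc a b := by rw [hSstar] at hs; exact hs.1
    have hb4 := hbal s hs
    have hx1 : Ψ / 2 ≤ P s := by
      rw [hΨ]
      nlinarith [sq_nonneg (2 * P s - 1 + y), sq_nonneg (2 * P s - 1 - y)]
    have hx2 : P s ≤ 1 - Ψ / 2 := by
      rw [hΨ]
      nlinarith [sq_nonneg (2 * P s - 1 + y), sq_nonneg (2 * P s - 1 - y)]
    have hΓle1 : Γ / 2 ≤ q₁ (Ψ / 2) := by
      rw [hminΓ]; exact min_le_left _ _
    have hΓle2 : Γ / 2 ≤ 1 - q₂ (1 - Ψ / 2) := by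
      rw [hminΓ]; exact min_le_right _ _
    constructor
    · have hQle : Q (Ψ / 2) ≤ s := by
        rw [hQ]
        exact csInf_le ⟨a, fun z hz => hz.1.1⟩ ⟨hsI, hx1⟩
      have hQlb := (hQbounds (Ψ / 2) hΨmem).1
      rw [le_div_iff₀ hba] at hQlb
      have hmul : Γ / 2 * (b - a) ≤ q₁ (Ψ / 2) * (b - a) :=
        mul_le_mul_of_nonneg_right hΓle1 hba.le
      have hring : (b - a) / 2 * Γ = Γ / 2 * (b - a) := by ring
      linarith
    · have hQge : s ≤ Q (1 - Ψ / 2) := by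
        rw [hQ]
        have hne : {s | s ∈ Icc a b ∧ 1 - Ψ / 2 ≤ P s}.Nonempty :=
          ⟨b, hbIcc, by rw [hPb]; linarith⟩
        apply le_csInf hne
        intro z hz
        by_contra hzs
        push_neg at hzs
        have := hPmono hz.1 hsI hzs
        have := hz.2
        linarith
      have hQub := (hQbounds (1 - Ψ / 2) hΨmem').2
      rw [div_le_iff₀ hba] at hQub
      have hmul : q₂ (1 - Ψ / 2) * (b - a) ≤ (1 - Γ / 2) * (b - a) :=
        mul_le_mul_of_nonneg_right (by linarith) hba.le
      have hring : a + (1 - Γ / 2) * (b - a) = b - (b - a) / 2 * Γ := by ring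
      linarith
  -- Sstar is nonempty
  have hSne : Sstar.Nonempty := by
    obtain ⟨s, hsI, hmax⟩ := exists_best_split a b hab p g hp_cont hp_pos hp_one hg_cont
      P M Xi Δ hP hM hXi hΔ
    rw [hSstar]
    exact ⟨s, hsI, hmax⟩
  -- the key inclusion of events
  set ρ : ℝ := (b - a) / 2 * Γ * (1 - Γ) with hρdef
  set s₀ : ℝ := a + (b - a) / 2 * Γ ^ 2 with hs₀def
  set s₁ : ℝ := b - (b - a) / 2 * Γ ^ 2 with hs₁def
  clear_value ρ s₀ s₁
  have hsubset : {ω | Metric.infDist (shat ω) Sstar ≤ ρ} ⊆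
      {ω | s₀ ≤ shat ω ∧ shat ω ≤ s₁} := by
    intro ω hω
    simp only [mem_setOf_eq] at hω ⊢
    constructor
    · by_contra h
      push_neg at h
      have hlt : Metric.infDist (shat ω) Sstar < (a + (b - a) / 2 * Γ) - shat ω := by
        have heq : ρ = (a + (b - a) / 2 * Γ) - s₀ := by rw [hρdef, hs₀def]; ring
        linarith
      rw [Metric.infDist_lt_iff hSne] at hlt
      obtain ⟨z, hz, hdz⟩ := hlt
      have hzge := (hloc z hz).1
      rw [Real.dist_eq] at hdz
      have : z - shat ω ≤ |shat ω - z| := by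
        rw [abs_sub_comm]
        exact le_abs_self _
      linarith
    · by_contra h
      push_neg at h
      have hlt : Metric.infDist (shat ω) Sstar < shat ω - (b - (b - a) / 2 * Γ) := by
        have heq : ρ = s₁ - (b - (b - a) / 2 * Γ) := by rw [hρdef, hs₁def]; ring
        linarith
      rw [Metric.infDist_lt_iff hSne] at hlt
      obtain ⟨z, hz, hdz⟩ := hlt
      have hzle := (hloc z hz).2
      rw [Real.dist_eq] at hdz
      have : shat ω - z ≤ |shat ω - z| := le_abs_self _
      linarith
  constructor
  · -- part (i)
    calc 1 - δ ≤ (Pr {ω | Metric.infDist (shat ω) Sstar ≤ ρ}).toReal := hclose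
    _ ≤ (Pr {ω | s₀ ≤ shat ω ∧ shat ω ≤ s₁}).toReal :=
        ENNReal.toReal_mono (measure_ne_top Pr _) (measure_mono hsubset)
  · -- part (ii)
    intro N W hWmeas hWrange hWcdf hWind
    have hΓsq : 0 ≤ Γ ^ 2 := sq_nonneg Γ
    have hΓsq1 : Γ ^ 2 ≤ 1 := by
      rw [pow_two]
      exact mul_le_one₀ hΓ1 hΓ0.le hΓ1
    have hterm0 : 0 ≤ (b - a) / 2 * Γ ^ 2 := mul_nonneg (by linarith) hΓsq
    have hterm1 : (b - a) / 2 * Γ ^ 2 ≤ (b - a) / 2 * 1 :=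
      mul_le_mul_of_nonneg_left hΓsq1 (by linarith)
    have hs₀Icc : s₀ ∈ Icc a b := by
      rw [hs₀def]
      constructor
      · linarith
      · linarith
    have hs₁Icc : s₁ ∈ Icc a b := by
      rw [hs₁def]
      constructor
      · linarith
      · linarith
    have hmemL : Γ ^ 2 / 2 ∈ Icc (0 : ℝ) 1 := ⟨by positivity, by linarith⟩
    obtain ⟨hpLmem0, hq₂pL0⟩ := hq₂inv (Γ ^ 2 / 2) hmemL
    have hpLmem : pL ∈ Icc (0 : ℝ) 1 := by rw [hpL]; exact hpLmem0
    have hq₂pL : q₂ pL = Γ ^ 2 / 2 := by rw [hpL]; exact hq₂pL0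
    have hmemR : 1 - Γ ^ 2 / 2 ∈ Icc (0 : ℝ) 1 := ⟨by linarith, by linarith⟩
    obtain ⟨hrmem, hq₁r⟩ := hq₁inv (1 - Γ ^ 2 / 2) hmemR
    have hpRmem : pR ∈ Icc (0 : ℝ) 1 := by
      rw [hpR]
      exact ⟨by linarith [hrmem.2], by linarith [hrmem.1]⟩
    have hpbar0 : 0 ≤ pbar := by rw [hpbar]; exact le_min hpLmem.1 hpRmem.1
    have hpbarL : pbar ≤ pL := by rw [hpbar]; exact min_le_left _ _
    have hpbarR : pbar ≤ pR := by rw [hpbar]; exact min_le_right _ _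
    -- `pL ≤ P s₀`
    have hPs₀ : pL ≤ P s₀ := by
      have hbdd : BddBelow {s | s ∈ Icc a b ∧ pL ≤ P s} := ⟨a, fun z hz => hz.1.1⟩
      have hne : {s | s ∈ Icc a b ∧ pL ≤ P s}.Nonempty :=
        ⟨b, hbIcc, by rw [hPb]; exact hpLmem.2⟩
      have hclosed : IsClosed {s | s ∈ Icc a b ∧ pL ≤ P s} := by
        have heqS : {s | s ∈ Icc a b ∧ pL ≤ P s} = Icc a b ∩ P ⁻¹' (Ici pL) := by
          ext z
          simp [Set.mem_setOf_eq, Set.mem_inter_iff, Set.mem_preimage, Set.mem_Ici]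
        rw [heqS]
        exact hPcont.preimage_isClosed_of_isClosed isClosed_Icc isClosed_Ici
      have hQmem : Q pL ∈ {s | s ∈ Icc a b ∧ pL ≤ P s} := by
        rw [hQ]; exact hclosed.csInf_mem hne hbdd
      have hQle : Q pL ≤ s₀ := by
        have h2 := (hQbounds pL hpLmem).2
        rw [hq₂pL, div_le_iff₀ hba] at h2
        have hrg : Γ ^ 2 / 2 * (b - a) = (b - a) / 2 * Γ ^ 2 := by ring
        rw [hs₀def]
        linarith
      exact le_trans hQmem.2 (hPmono.monotoneOn hQmem.1 hs₀Icc hQle)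
    -- `P s₁ ≤ 1 - pR`
    have hPs₁ : P s₁ ≤ 1 - pR := by
      have hrpR : q₁inv (1 - Γ ^ 2 / 2) = 1 - pR := by rw [hpR]; ring
      by_contra hcon
      push_neg at hcon
      have hrlt : q₁inv (1 - Γ ^ 2 / 2) < P s₁ := by rw [hrpR]; linarith
      have hQge : s₁ ≤ Q (q₁inv (1 - Γ ^ 2 / 2)) := by
        have h1 := (hQbounds _ hrmem).1
        rw [hq₁r, le_div_iff₀ hba] at h1
        have hrg : (1 - Γ ^ 2 / 2) * (b - a) = (b - a) - (b - a) / 2 * Γ ^ 2 := by ring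
        rw [hs₁def]
        linarith
      have hivt := intermediate_value_Icc hs₁Icc.1 (hPcont.mono (Icc_subset_Icc le_rfl hs₁Icc.2))
      have hrmemI : q₁inv (1 - Γ ^ 2 / 2) ∈ Icc (P a) (P s₁) := by
        rw [hPa]; exact ⟨hrmem.1, hrlt.le⟩
      obtain ⟨s', hs'mem, hPs'⟩ := hivt hrmemI
      have hs'I : s' ∈ Icc a b := ⟨hs'mem.1, le_trans hs'mem.2 hs₁Icc.2⟩
      have hQles' : Q (q₁inv (1 - Γ ^ 2 / 2)) ≤ s' := by
        rw [hQ]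
        have hbdd : BddBelow {s | s ∈ Icc a b ∧ q₁inv (1 - Γ ^ 2 / 2) ≤ P s} :=
          ⟨a, fun z hz => hz.1.1⟩
        exact csInf_le hbdd ⟨hs'I, hPs'.ge⟩
      have hs'lt : s' < s₁ := by
        rcases eq_or_lt_of_le hs'mem.2 with h | h
        · rw [h] at hPs'
          rw [hPs'] at hrlt
          exact absurd hrlt (lt_irrefl _)
        · exact h
      linarith
    -- indicator variables
    have hφLmeas : Measurable (fun x : ℝ => if x ≤ s₀ then (1 : ℝ) else 0) :=
      Measurable.ite measurableSet_Iic measurable_const measurable_const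
    have hφRmeas : Measurable (fun x : ℝ => if s₁ < x then (1 : ℝ) else 0) :=
      Measurable.ite measurableSet_Ioi measurable_const measurable_const
    set XL : Fin N → Ω → ℝ :=
      fun i => (fun x : ℝ => if x ≤ s₀ then (1 : ℝ) else 0) ∘ W i with hXLdef
    set XR : Fin N → Ω → ℝ :=
      fun i => (fun x : ℝ => if s₁ < x then (1 : ℝ) else 0) ∘ W i with hXRdef
    have hXLmeas : ∀ i, Measurable (XL i) := fun i => hφLmeas.comp (hWmeas i)
    have hXRmeas : ∀ i, Measurable (XR i) := fun i => hφRmeas.comp (hWmeas i)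
    have hXLapp : ∀ i ω, XL i ω = if W i ω ≤ s₀ then (1 : ℝ) else 0 := fun i ω => rfl
    have hXRapp : ∀ i ω, XR i ω = if s₁ < W i ω then (1 : ℝ) else 0 := fun i ω => rfl
    have hXLval : ∀ i ω, XL i ω = 0 ∨ XL i ω = 1 := by
      intro i ω
      rw [hXLapp]
      by_cases h : W i ω ≤ s₀
      · right; simp [h]
      · left; simp [h]
    have hXRval : ∀ i ω, XR i ω = 0 ∨ XR i ω = 1 := by
      intro i ω
      rw [hXRapp]
      by_cases h : s₁ < W i ω
      · right; simp [h]
      · left; simp [h]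
    have hXLind : iIndepFun XL Pr :=
      hWind.comp (fun _ => fun x : ℝ => if x ≤ s₀ then (1 : ℝ) else 0) (fun _ => hφLmeas)
    have hXRind : iIndepFun XR Pr :=
      hWind.comp (fun _ => fun x : ℝ => if s₁ < x then (1 : ℝ) else 0) (fun _ => hφRmeas)
    have hqL : ∀ i, (Pr {ω | XL i ω = 1}).toReal = P s₀ := by
      intro i
      have hseteq : {ω | XL i ω = 1} = {ω | W i ω ≤ s₀} := by
        ext ω
        simp only [Set.mem_setOf_eq, hXLapp]
        by_cases h : W i ω ≤ s₀
        · simp [h]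
        · simp [h]
      rw [hseteq]
      exact hWcdf i s₀ hs₀Icc
    have hqR : ∀ i, (Pr {ω | XR i ω = 1}).toReal = 1 - P s₁ := by
      intro i
      have hseteq : {ω | XR i ω = 1} = {ω | W i ω ≤ s₁}ᶜ := by
        ext ω
        simp only [Set.mem_setOf_eq, Set.mem_compl_iff, not_le, hXRapp]
        by_cases h : s₁ < W i ω
        · simp [h]
        · simp [h]
      have hmeasW : MeasurableSet {ω | W i ω ≤ s₁} := measurableSet_le (hWmeas i) measurable_const
      rw [hseteq, prob_compl_eq_one_sub hmeasW,
        ENNReal.toReal_sub_of_le prob_le_one ENNReal.one_ne_top, ENNReal.toReal_one,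
        hWcdf i s₁ hs₁Icc]
    have hL := binom_lower_tail Pr XL hXLmeas hXLval hXLind (P s₀) (pL / 2) hqL
      (hP01 s₀ hs₀Icc).2 (by linarith [hpLmem.1]) (by linarith)
    have hR := binom_lower_tail Pr XR hXRmeas hXRval hXRind (1 - P s₁) (pR / 2) hqR
      (by linarith [(hP01 s₁ hs₁Icc).1]) (by linarith [hpRmem.1]) (by linarith)
    have hN0 : (0 : ℝ) ≤ (N : ℝ) := Nat.cast_nonneg N
    have hexpL : Real.exp (-2 * (N : ℝ) * (pL / 2) ^ 2) ≤
        Real.exp (-(N : ℝ) * pbar ^ 2 / 2) := by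
      apply Real.exp_le_exp.2
      have h2 := mul_le_mul_of_nonneg_left (pow_le_pow_left₀ hpbar0 hpbarL 2) hN0
      linarith [h2]
    have hexpR : Real.exp (-2 * (N : ℝ) * (pR / 2) ^ 2) ≤
        Real.exp (-(N : ℝ) * pbar ^ 2 / 2) := by
      apply Real.exp_le_exp.2
      have h2 := mul_le_mul_of_nonneg_left (pow_le_pow_left₀ hpbar0 hpbarR 2) hN0
      linarith [h2]
    have hclosemeas : MeasurableSet {ω | Metric.infDist (shat ω) Sstar ≤ ρ} :=
      measurableSet_le ((Metric.continuous_infDist_pt Sstar).measurable.comp hshat_meas)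
        measurable_const
    set Cl := {ω | Metric.infDist (shat ω) Sstar ≤ ρ} with hCldef
    set BL := {ω | (∑ i, XL i ω) ≤ (N : ℝ) * (pL / 2)} with hBLdef
    set BR := {ω | (∑ i, XR i ω) ≤ (N : ℝ) * (pR / 2)} with hBRdef
    set Gd := {ω | (N : ℝ) * pL / 2 ≤ ((Finset.univ.filter fun i => W i ω ≤ shat ω).card : ℝ) ∧
        (N : ℝ) * pR / 2 ≤ ((Finset.univ.filter fun i => shat ω < W i ω).card : ℝ)} with hGdef
    have hcover : (Set.univ : Set Ω) ⊆ Gd ∪ (Clᶜ ∪ (BL ∪ BR)) := by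
      intro ω _
      by_cases hCl : ω ∈ Cl
      swap
      · exact Or.inr (Or.inl hCl)
      by_cases hBLm : ω ∈ BL
      · exact Or.inr (Or.inr (Or.inl hBLm))
      by_cases hBRm : ω ∈ BR
      · exact Or.inr (Or.inr (Or.inr hBRm))
      left
      obtain ⟨hsh₀, hsh₁⟩ := hsubset hCl
      rw [hBLdef] at hBLm
      rw [hBRdef] at hBRm
      simp only [Set.mem_setOf_eq, not_le] at hBLm hBRm
      rw [hGdef]
      simp only [Set.mem_setOf_eq]
      constructor
      · have hcard : ((Finset.univ.filter fun i => W i ω ≤ shat ω).card : ℝ) =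
            ∑ i, (if W i ω ≤ shat ω then (1 : ℝ) else 0) := by
          rw [Finset.card_filter]
          push_cast
          apply Finset.sum_congr rfl
          intro i _
          split_ifs <;> simp
        rw [hcard]
        have hmono : (∑ i, XL i ω) ≤ ∑ i, (if W i ω ≤ shat ω then (1 : ℝ) else 0) := by
          apply Finset.sum_le_sum
          intro i _
          rw [hXLapp]
          split_ifs with h1 h2
          · exact le_refl 1
          · exact absurd (le_trans h1 hsh₀) h2
          · exact zero_le_one
          · exact le_refl 0
        have hrg : (N : ℝ) * pL / 2 = (N : ℝ) * (pL / 2) := by ring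
        linarith
      · have hcard : ((Finset.univ.filter fun i => shat ω < W i ω).card : ℝ) =
            ∑ i, (if shat ω < W i ω then (1 : ℝ) else 0) := by
          rw [Finset.card_filter]
          push_cast
          apply Finset.sum_congr rfl
          intro i _
          split_ifs <;> simp
        rw [hcard]
        have hmono : (∑ i, XR i ω) ≤ ∑ i, (if shat ω < W i ω then (1 : ℝ) else 0) := by
          apply Finset.sum_le_sum
          intro i _
          rw [hXRapp]
          split_ifs with h1 h2
          · exact le_refl 1
          · exact absurd (lt_of_le_of_lt hsh₁ h1) h2
          · exact zero_le_one
          · exact le_refl 0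
        have hrg : (N : ℝ) * pR / 2 = (N : ℝ) * (pR / 2) := by ring
        linarith
    have hPrCl : (Pr Clᶜ).toReal ≤ δ := by
      rw [hCldef, prob_compl_eq_one_sub hclosemeas,
        ENNReal.toReal_sub_of_le prob_le_one ENNReal.one_ne_top, ENNReal.toReal_one]
      linarith [hclose]
    have hPrBL : (Pr BL).toReal ≤ Real.exp (-(N : ℝ) * pbar ^ 2 / 2) := le_trans hL hexpL
    have hPrBR : (Pr BR).toReal ≤ Real.exp (-(N : ℝ) * pbar ^ 2 / 2) := le_trans hR hexpR
    have hm : Pr Set.univ ≤ Pr Gd + (Pr Clᶜ + (Pr BL + Pr BR)) := by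
      calc Pr Set.univ ≤ Pr (Gd ∪ (Clᶜ ∪ (BL ∪ BR))) := measure_mono hcover
      _ ≤ Pr Gd + Pr (Clᶜ ∪ (BL ∪ BR)) := measure_union_le _ _
      _ ≤ Pr Gd + (Pr Clᶜ + Pr (BL ∪ BR)) := add_le_add_right (measure_union_le _ _) _
      _ ≤ Pr Gd + (Pr Clᶜ + (Pr BL + Pr BR)) :=
          add_le_add_right (add_le_add_right (measure_union_le _ _) _) _
    rw [measure_univ] at hm
    have hne1 : Pr Clᶜ + (Pr BL + Pr BR) ≠ ⊤ :=
      ENNReal.add_ne_top.2 ⟨measure_ne_top _ _,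
        ENNReal.add_ne_top.2 ⟨measure_ne_top _ _, measure_ne_top _ _⟩⟩
    have hne2 : Pr Gd + (Pr Clᶜ + (Pr BL + Pr BR)) ≠ ⊤ :=
      ENNReal.add_ne_top.2 ⟨measure_ne_top _ _, hne1⟩
    have h1 : (1 : ℝ) ≤ (Pr Gd).toReal + ((Pr Clᶜ).toReal + ((Pr BL).toReal + (Pr BR).toReal)) := by
      have := ENNReal.toReal_mono hne2 hm
      rw [ENNReal.toReal_one] at this
      rw [ENNReal.toReal_add (measure_ne_top _ _) hne1,
        ENNReal.toReal_add (measure_ne_top _ _)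
          (ENNReal.add_ne_top.2 ⟨measure_ne_top _ _, measure_ne_top _ _⟩),
        ENNReal.toReal_add (measure_ne_top _ _) (measure_ne_top _ _)] at this
      exact this
    linarith [h1, hPrCl, hPrBL, hPrBR]

end
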